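/- Let X ∈ MCR. Then the set S := {Y ∈ RMMaxF : Y ⊆ X} is nonempty, and the support and bond of X are derived from RMMaxF by: Supp(∧X) = min{Supp(∧Y) : Y ∈ S} and bond(X) = min{bond(Y) : Y ∈ S}. -/

import Mathlib

open Finset

variable {τ ι : Type*} [DecidableEq ι]

/-- Conjunctive support: number of transactions containing the whole pattern. -/
def suppConj (T : Finset τ) (items : τ → Finset ι) (X : Finset ι) : ℕ :=
  (T.filter fun t => X ⊆ items t).card

/-- Disjunctive support: number of transactions containing at least one item of the pattern. -/
def suppDisj (T : Finset τ) (items : τ → Finset ι) (X : Finset ι) : ℕ :=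
  (T.filter fun t => (X ∩ items t).Nonempty).card

/-- The bond measure (division by zero in `ℚ` yields `0`, matching the convention). -/
def bond (T : Finset τ) (items : τ → Finset ι) (X : Finset ι) : ℚ :=
  (suppConj T items X : ℚ) / (suppDisj T items X : ℚ)

/-- Correlated patterns. -/
def MC (T : Finset τ) (items : τ → Finset ι) (I : Finset ι) (minbond : ℚ) :
    Set (Finset ι) :=
  {X | X ⊆ I ∧ minbond ≤ bond T items X}

/-- Correlated rare patterns. -/
def MCR (T : Finset τ) (items : τ → Finset ι) (I : Finset ι) (minsupp : ℕ) (minbond : ℚ) :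
    Set (Finset ι) :=
  {X | X ⊆ I ∧ minbond ≤ bond T items X ∧ suppConj T items X < minsupp}

/-- Closed correlated rare patterns. -/
def MFCR (T : Finset τ) (items : τ → Finset ι) (I : Finset ι) (minsupp : ℕ) (minbond : ℚ) :
    Set (Finset ι) :=
  {X | X ∈ MCR T items I minsupp minbond ∧
    ∀ Y : Finset ι, X ⊂ Y → Y ⊆ I → bond T items Y ≠ bond T items X}

/-- Minimal correlated rare patterns. -/
def MMCR (T : Finset τ) (items : τ → Finset ι) (I : Finset ι) (minsupp : ℕ) (minbond : ℚ) :
    Set (Finset ι) :=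
  {X | X ∈ MCR T items I minsupp minbond ∧
    ∀ Y : Finset ι, Y ⊂ X → bond T items Y ≠ bond T items X}

/-- Maximal correlated patterns. -/
def MCMax (T : Finset τ) (items : τ → Finset ι) (I : Finset ι) (minbond : ℚ) :
    Set (Finset ι) :=
  {X | X ∈ MC T items I minbond ∧
    ∀ Y : Finset ι, X ⊂ Y → Y ⊆ I → Y ∉ MC T items I minbond}

/-- Maximal closed correlated rare patterns. -/
def MFCRMax (T : Finset τ) (items : τ → Finset ι) (I : Finset ι) (minsupp : ℕ) (minbond : ℚ) :
    Set (Finset ι) :=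
  MFCR T items I minsupp minbond ∩ MCMax T items I minbond

/-- The representation `RMMaxF = MMCR ∪ MFCRMax`. -/
def RMMaxF (T : Finset τ) (items : τ → Finset ι) (I : Finset ι) (minsupp : ℕ) (minbond : ℚ) :
    Set (Finset ι) :=
  MMCR T items I minsupp minbond ∪ MFCRMax T items I minsupp minbond

lemma suppConj_anti' (T : Finset τ) (items : τ → Finset ι) {Y X : Finset ι} (h : Y ⊆ X) :
    suppConj T items X ≤ suppConj T items Y := by
  apply Finset.card_le_card
  apply Finset.monotone_filter_right
  intro t _ ht
  exact h.trans ht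

lemma suppDisj_mono' (T : Finset τ) (items : τ → Finset ι) {Y X : Finset ι} (h : Y ⊆ X) :
    suppDisj T items Y ≤ suppDisj T items X := by
  apply Finset.card_le_card
  apply Finset.monotone_filter_right
  intro t _ ht
  exact ht.mono (Finset.inter_subset_inter h (le_refl _))

lemma pos_of_bond_pos (T : Finset τ) (items : τ → Finset ι) {X : Finset ι}
    (h : 0 < bond T items X) :
    0 < suppConj T items X ∧ 0 < suppDisj T items X := by
  unfold bond at h
  constructor
  · by_contra hc
    push_neg at hc
    interval_cases h' : suppConj T items X
    simp [h'] at h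
  · by_contra hd
    push_neg at hd
    interval_cases h' : suppDisj T items X
    simp [h'] at h

lemma bond_eq_subset (T : Finset τ) (items : τ → Finset ι) {Y X : Finset ι}
    (hYX : Y ⊆ X) (hbX : 0 < bond T items X) (hb : bond T items Y = bond T items X) :
    suppConj T items Y = suppConj T items X := by
  obtain ⟨hcX, hdX⟩ := pos_of_bond_pos T items hbX
  obtain ⟨hcY, hdY⟩ := pos_of_bond_pos T items (hb ▸ hbX)
  have hcle := suppConj_anti' T items hYX
  have hdle := suppDisj_mono' T items hYX
  unfold bond at hb
  rw [div_eq_div_iff (by exact_mod_cast hdY.ne') (by exact_mod_cast hdX.ne')] at hb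
  have hb' : suppConj T items Y * suppDisj T items X
      = suppConj T items X * suppDisj T items Y := by exact_mod_cast hb
  nlinarith [hb', hcle, hdle, hcX, hdX]

lemma mem_MCR_of_mem_RMMaxF {T : Finset τ} {items : τ → Finset ι} {I : Finset ι}
    {minsupp : ℕ} {minbond : ℚ} {Y : Finset ι}
    (h : Y ∈ RMMaxF T items I minsupp minbond) : Y ∈ MCR T items I minsupp minbond := by
  rcases h with h | h
  · exact h.1
  · exact h.1.1

theorem stmt11 (T : Finset τ) (items : τ → Finset ι) (I : Finset ι)
    (hitems : ∀ t ∈ T, items t ⊆ I)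
    (minsupp : ℕ) (minbond : ℚ)
    (hs : 1 ≤ minsupp) (hb0 : 0 < minbond) (hb1 : minbond ≤ 1)
    (X : Finset ι) (hX : X ∈ MCR T items I minsupp minbond) :
    let S := {Y | Y ∈ RMMaxF T items I minsupp minbond ∧ Y ⊆ X}
    S.Nonempty ∧
      IsLeast ((fun Y => suppConj T items Y) '' S) (suppConj T items X) ∧
        IsLeast ((fun Y => bond T items Y) '' S) (bond T items X) := by
  intro S
  obtain ⟨hXI, hXb, hXr⟩ := hX
  have hbX : 0 < bond T items X := lt_of_lt_of_le hb0 hXb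
  -- choose a subset of X with the same bond, of minimal cardinality
  set P := X.powerset.filter (fun Y => bond T items Y = bond T items X) with hP
  have hXP : X ∈ P := by
    simp [hP]
  obtain ⟨Y, hYP, hmin⟩ := P.exists_min_image Finset.card ⟨X, hXP⟩
  simp only [hP, Finset.mem_filter, Finset.mem_powerset] at hYP
  obtain ⟨hYX, hYb⟩ := hYP
  have hYcX : suppConj T items Y = suppConj T items X :=
    bond_eq_subset T items hYX hbX hYb
  have hYMM : Y ∈ MMCR T items I minsupp minbond := by
    refine ⟨⟨hYX.trans hXI, by rw [hYb]; exact hXb, by rw [hYcX]; exact hXr⟩, ?_⟩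
    intro Z hZY hZb
    have hZP : Z ∈ P := by
      simp only [hP, Finset.mem_filter, Finset.mem_powerset]
      exact ⟨(hZY.subset).trans hYX, by rw [hZb, hYb]⟩
    have := hmin Z hZP
    exact absurd (Finset.card_lt_card hZY) (not_lt.mpr this)
  have hYS : Y ∈ S := ⟨Or.inl hYMM, hYX⟩
  have hbond_lb : ∀ Z ∈ S, bond T items X ≤ bond T items Z := by
    intro Z hZ
    obtain ⟨hZR, hZX⟩ := hZ
    have hZMCR := mem_MCR_of_mem_RMMaxF hZR
    have hbZ : 0 < bond T items Z := lt_of_lt_of_le hb0 hZMCR.2.1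
    obtain ⟨hcX, hdX⟩ := pos_of_bond_pos T items hbX
    obtain ⟨hcZ, hdZ⟩ := pos_of_bond_pos T items hbZ
    have hcle := suppConj_anti' T items hZX
    have hdle := suppDisj_mono' T items hZX
    unfold bond
    rw [div_le_div_iff₀ (by exact_mod_cast hdX) (by exact_mod_cast hdZ)]
    exact_mod_cast Nat.mul_le_mul hcle hdle
  refine ⟨⟨Y, hYS⟩, ⟨⟨Y, hYS, hYcX⟩, ?_⟩, ⟨⟨Y, hYS, hYb⟩, ?_⟩⟩
  · rintro n ⟨Z, hZ, rfl⟩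
    exact suppConj_anti' T items hZ.2
  · rintro b ⟨Z, hZ, rfl⟩
    exact hbond_lb Z hZ
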